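/- Let ω : ℝ → ℝ be an odd function, non-negative on ℝ⁺, such that x ↦ ω(x)/x is non-decreasing on (0,∞). Then for all x, y ∈ ℝ, |ω(x) − ω(y)| ≥ ω(|x−y|/2). -/

import Mathlib

theorem omega_diff_ge (ω : ℝ → ℝ)
    (hodd : ∀ x : ℝ, ω (-x) = -ω x)
    (hnonneg : ∀ x : ℝ, 0 ≤ x → 0 ≤ ω x)
    (hmono : ∀ x y : ℝ, 0 < x → x ≤ y → ω x / x ≤ ω y / y) :
    ∀ x y : ℝ, ω (|x - y| / 2) ≤ |ω x - ω y| := by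
  have h0 : ω 0 = 0 := by have := hodd 0; simp at this; linarith
  -- monotone-type lemma: 0 < d ≤ a implies ω d ≤ ω a
  have mono_ge : ∀ d a : ℝ, 0 < d → d ≤ a → ω d ≤ ω a := by
    intro d a hd hda
    have ha : 0 < a := lt_of_lt_of_le hd hda
    have h := hmono d a hd hda
    have h1 : ω d * a ≤ ω a * d := by
      rw [div_le_div_iff₀ hd ha] at h; linarith
    have h2 : 0 ≤ ω d := hnonneg d hd.le
    nlinarith
  -- key lemma for 0 ≤ y < x
  have keypos : ∀ x y : ℝ, 0 ≤ y → y < x → ω ((x - y) / 2) ≤ ω x - ω y := by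
    intro x y hy hxy
    set d := (x - y) / 2 with hdd
    have hd : 0 < d := by simp only [hdd]; linarith
    have hdx : d ≤ x := by simp only [hdd]; linarith
    have hx : 0 < x := lt_of_lt_of_le hd hdx
    have hωd : 0 ≤ ω d := hnonneg d hd.le
    have h1 : ω d * x ≤ ω x * d := by
      have h := hmono d x hd hdx
      rw [div_le_div_iff₀ hd hx] at h; linarith
    rcases eq_or_lt_of_le hy with hy0 | hy0
    · rw [← hy0, h0]
      have : ω d ≤ ω x := mono_ge d x hd hdx
      linarith
    · have h2 : ω y * x ≤ ω x * y := by
        have h := hmono y x hy0 hxy.le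
        rw [div_le_div_iff₀ hy0 hx] at h; linarith
      have h3 : ω x * y = ω x * x - 2 * (ω x * d) := by
        have hx2 : y = x - 2 * d := by simp only [hdd]; ring
        rw [hx2]; ring
      rw [← mul_le_mul_iff_of_pos_right hx]
      nlinarith [h1, h2, h3, mul_nonneg hωd hx.le]
  -- key lemma for y ≤ x
  have key : ∀ x y : ℝ, y ≤ x → ω ((x - y) / 2) ≤ ω x - ω y := by
    intro x y hxy
    rcases eq_or_lt_of_le hxy with heq | hlt
    · rw [heq]; simp [h0]
    · rcases le_or_gt 0 y with hy | hy
      · exact keypos x y hy hlt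
      · rcases le_or_gt x 0 with hx | hx
        · -- both ≤ 0: use oddness
          have h := keypos (-y) (-x) (by linarith) (by linarith)
          rw [hodd, hodd] at h
          have he : (-y - -x) / 2 = (x - y) / 2 := by ring
          rw [he] at h; linarith
        · -- y < 0 < x
          set d := (x - y) / 2 with hdd
          have hd : 0 < d := by simp only [hdd]; linarith
          have hωy : ω y ≤ 0 := by
            have := hnonneg (-y) (by linarith)
            rw [hodd] at this; linarith
          have hωx : 0 ≤ ω x := hnonneg x hx.le
          rcases le_or_gt d x with hdx | hdx
          · have := mono_ge d x hd hdx
            linarith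
          · have hdy : d ≤ -y := by simp only [hdd] at *; linarith
            have := mono_ge d (-y) hd hdy
            rw [hodd] at this
            linarith
  intro x y
  rcases le_total y x with hxy | hxy
  · have h := key x y hxy
    have habs : |x - y| = x - y := abs_of_nonneg (by linarith)
    rw [habs]
    calc ω ((x - y) / 2) ≤ ω x - ω y := h
      _ ≤ |ω x - ω y| := le_abs_self _
  · have h := key y x hxy
    have habs : |x - y| = y - x := by rw [abs_sub_comm]; exact abs_of_nonneg (by linarith)
    rw [habs]
    calc ω ((y - x) / 2) ≤ ω y - ω x := h
      _ ≤ |ω x - ω y| := by rw [abs_sub_comm]; exact le_abs_self _
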